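/- arXiv:2011.08448 — 7 statements merged into one kernel-verified Lean document; each statement's English description precedes it below -/
import Mathlib

section
/- Let T be a tree with non-negative integer node weights w, and let c be a node such that every connected component of T minus c has total weight at most w(T)/2 (a w-centroid). Then the connected components of T minus c can be partitioned into two forests F1 and F2 such that both w(F1) and w(F2) are at most 2·w(T)/3. -/
open scoped Classical

/-- The total weight of the vertices in the connected component `K` of the graph `H`
(on a finite vertex type), for node weights `w`. -/
noncomputable def compWeight {α : Type*} [Fintype α] (H : SimpleGraph α)
    (w : α → ℕ) (K : H.ConnectedComponent) : ℕ :=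
  ∑ v : α, if H.connectedComponentMk v = K then w v else 0

/-- The abstract combinatorial core: if each part has weight at most `W/2` and the total
is at most `W`, the parts can be split into two groups each of weight at most `2W/3`. -/
lemma key_partition {ι : Type*} [Fintype ι] (a : ι → ℕ) (W : ℕ)
    (hW : ∀ i, 2 * a i ≤ W) (ht : ∑ i, a i ≤ W) :
    ∃ S : Finset ι, 3 * ∑ i ∈ S, a i ≤ 2 * W ∧ 3 * ∑ i ∈ Sᶜ, a i ≤ 2 * W := by
  set t := ∑ i, a i with htdef
  have hne : (Finset.univ.filter (fun S : Finset ι => t ≤ 3 * ∑ i ∈ S, a i)).Nonempty := by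
    refine ⟨Finset.univ, ?_⟩
    simp only [Finset.mem_filter, Finset.mem_univ, true_and]
    omega
  obtain ⟨S, hSmem, hSmin⟩ := Finset.exists_min_image _ (fun S => ∑ i ∈ S, a i) hne
  simp only [Finset.mem_filter, Finset.mem_univ, true_and] at hSmem hSmin
  have hcompl : ∑ i ∈ Sᶜ, a i + ∑ i ∈ S, a i = t := Finset.sum_compl_add_sum S a
  refine ⟨S, ?_, by omega⟩
  by_contra h
  push_neg at h
  have hpos : ∑ i ∈ S, a i ≠ 0 := by omega
  obtain ⟨i, hiS, hia⟩ := Finset.exists_ne_zero_of_sum_ne_zero hpos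
  have herase : ∑ j ∈ S.erase i, a j + a i = ∑ j ∈ S, a j := Finset.sum_erase_add S a hiS
  by_cases hcase : 3 * a i ≤ t
  · have : ¬ (t ≤ 3 * ∑ j ∈ S.erase i, a j) := by
      intro hmem
      have := hSmin _ hmem
      omega
    omega
  · have h1 : t ≤ 3 * ∑ j ∈ ({i} : Finset ι), a j := by simp; omega
    have := hSmin _ h1
    simp at this
    have := hW i
    omega

/-- **Lemma 3.3.** If `c` is a `w`-centroid of a tree `T` (every connected component of
`T \ {c}` has weight at most `w(T)/2`), then the components of `T \ {c}` can be
partitioned into two forests `F₁, F₂` with `w(F₁), w(F₂) ≤ 2·w(T)/3`. -/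
theorem centroid_bipartition {V : Type*} [Fintype V] (T : SimpleGraph V)
    (hT : T.IsTree) (w : V → ℕ) (c : V)
    (hcentroid : ∀ K : (T.induce {v : V | v ≠ c}).ConnectedComponent,
      2 * compWeight (T.induce {v : V | v ≠ c}) (fun v => w v.1) K ≤ ∑ v : V, w v) :
    ∃ s : (T.induce {v : V | v ≠ c}).ConnectedComponent → Bool,
      3 * (∑ K : (T.induce {v : V | v ≠ c}).ConnectedComponent,
          if s K then compWeight (T.induce {v : V | v ≠ c}) (fun v => w v.1) K else 0)
        ≤ 2 * ∑ v : V, w v ∧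
      3 * (∑ K : (T.induce {v : V | v ≠ c}).ConnectedComponent,
          if s K then 0 else compWeight (T.induce {v : V | v ≠ c}) (fun v => w v.1) K)
        ≤ 2 * ∑ v : V, w v := by
  set H := T.induce {v : V | v ≠ c} with hH
  set a : H.ConnectedComponent → ℕ := compWeight H (fun v => w v.1) with ha
  have ht : ∑ K : H.ConnectedComponent, a K ≤ ∑ v : V, w v := by
    simp only [ha]
    unfold compWeight
    rw [Finset.sum_comm]
    have h1 : ∑ v : {v : V | v ≠ c}, (∑ K : H.ConnectedComponent,
        if H.connectedComponentMk v = K then w v.1 else 0)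
        = ∑ v : {v : V | v ≠ c}, w v.1 := by
      apply Finset.sum_congr rfl
      intro v _
      simp [Finset.sum_ite_eq]
    rw [h1]
    have h2 : ∑ v ∈ Finset.univ.filter (fun v : V => v ≠ c), w v
        = ∑ v : {v : V | v ≠ c}, w v.1 :=
      Finset.sum_subtype _ (by simp) (fun v => w v)
    rw [← h2]
    exact Finset.sum_le_sum_of_subset (Finset.filter_subset _ _)
  obtain ⟨S, hS1, hS2⟩ := key_partition a (∑ v : V, w v) hcentroid ht
  refine ⟨fun K => decide (K ∈ S), ?_, ?_⟩
  · have : (∑ K : H.ConnectedComponent, if decide (K ∈ S) then a K else 0)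
        = ∑ K ∈ S, a K := by
      simp only [decide_eq_true_eq]
      rw [Finset.sum_ite_mem, Finset.univ_inter]
    rw [this]; exact hS1
  · have : (∑ K : H.ConnectedComponent, if decide (K ∈ S) then 0 else a K)
        = ∑ K ∈ Sᶜ, a K := by
      simp only [decide_eq_true_eq]
      rw [Finset.sum_ite, Finset.sum_const_zero, zero_add]
      congr 1
      ext K
      simp
    rw [this]; exact hS2
end

section
/- Let G = (V,E) be a graph and (A, V\A) a cut such that A is partitioned into A_1,…,A_k where each A_i is a module of G \ (A \ A_i). Let B_i = N_G(A_i) \ A. Then for every u ∈ A and v ∉ A, d_G(u,v) = min over 1 ≤ i ≤ k of (d_G(u,A_i) + 1 + d_G(B_i,v)), where distances to empty sets are +∞. -/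
open scoped Classical

/-- `setEDist G u S` is the distance in `G` from the vertex `u` to the set `S`,
namely `min_{s ∈ S} d_G(u,s)`, with value `⊤` (i.e. `+∞`) when `S = ∅`. -/
noncomputable def setEDist {V : Type*} (G : SimpleGraph V) (u : V) (S : Set V) : ℕ∞ :=
  ⨅ s ∈ S, G.edist u s

lemma setEDist_le {V : Type*} (G : SimpleGraph V) (u : V) {S : Set V} {s : V}
    (hs : s ∈ S) : setEDist G u S ≤ G.edist u s :=
  iInf₂_le s hs

lemma setEDist_witness {V : Type*} (G : SimpleGraph V) (u : V) (S : Set V)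
    (h : setEDist G u S ≠ ⊤) : ∃ s ∈ S, G.edist u s ≤ setEDist G u S := by
  have hlt : setEDist G u S < setEDist G u S + 1 := by
    refine ENat.lt_add_one_iff h |>.mpr le_rfl
  rw [setEDist] at hlt
  simp only [iInf_lt_iff] at hlt
  obtain ⟨s, hs, hlt⟩ := hlt
  exact ⟨s, hs, (ENat.lt_add_one_iff h).mp hlt⟩

lemma exists_cross {V : Type*} {G : SimpleGraph V} {A : Set V} :
    ∀ {u v : V} (p : G.Walk u v), u ∈ A → v ∉ A →
    ∃ a b, a ∈ A ∧ b ∉ A ∧ G.Adj a b ∧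
      ∃ (q : G.Walk u a) (r : G.Walk b v), q.length + 1 + r.length = p.length := by
  intro u v p
  induction p with
  | nil => intro hu hv; exact absurd hu hv
  | @cons x y z h p ih =>
    intro hu hv
    by_cases hy : y ∈ A
    · obtain ⟨a, b, ha, hb, hab, q, r, hlen⟩ := ih hy hv
      exact ⟨a, b, ha, hb, hab, SimpleGraph.Walk.cons h q, r, by
        simp only [SimpleGraph.Walk.length_cons]; omega⟩
    · exact ⟨x, y, hu, hy, h, SimpleGraph.Walk.nil, p, by simp [Nat.add_comm]⟩

/-- **Lemma 3.2, first case.** Let `(A, V \ A)` be a cut such that `A` is partitioned into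
`A_1, …, A_k`, each `A_i` being a module of `G \ (A \ A_i)` (all its vertices have the same
neighbours outside `A`).  With `B_i = N_G(A_i) \ A`, for every `u ∈ A` and `v ∉ A`,
`d_G(u,v) = min_{1 ≤ i ≤ k} (d_G(u,A_i) + 1 + d_G(B_i,v))`. -/
theorem dist_formula_cross {V : Type*} [Fintype V] (G : SimpleGraph V)
    (A : Set V) (k : ℕ) (Apart : Fin k → Set V)
    (hcover : (⋃ i, Apart i) = A)
    (hdisj : ∀ i j, i ≠ j → Disjoint (Apart i) (Apart j))
    (hmod : ∀ i, ∀ u ∈ Apart i, ∀ v ∈ Apart i, ∀ x ∉ A, (G.Adj u x ↔ G.Adj v x))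
    (B : Fin k → Set V) (hB : ∀ i, B i = {x | x ∉ A ∧ ∃ a ∈ Apart i, G.Adj a x})
    (u v : V) (hu : u ∈ A) (hv : v ∉ A) :
    G.edist u v = ⨅ i : Fin k, (setEDist G u (Apart i) + 1 + setEDist G v (B i)) := by
  apply le_antisymm
  · refine le_iInf fun i => ?_
    rcases eq_or_ne (setEDist G u (Apart i)) ⊤ with h1 | h1
    · simp [h1]
    rcases eq_or_ne (setEDist G v (B i)) ⊤ with h2 | h2
    · simp [h2]
    obtain ⟨a, ha, hda⟩ := setEDist_witness G u (Apart i) h1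
    obtain ⟨b, hb, hdb⟩ := setEDist_witness G v (B i) h2
    have hbB := hb
    rw [hB i] at hbB
    obtain ⟨hbA, a', ha', hab'⟩ := hbB
    have hab : G.Adj a b := (hmod i a ha a' ha' b hbA).mpr hab'
    calc G.edist u v ≤ G.edist u a + G.edist a v := SimpleGraph.edist_triangle
      _ ≤ G.edist u a + (G.edist a b + G.edist b v) :=
          add_le_add le_rfl SimpleGraph.edist_triangle
      _ = G.edist u a + 1 + G.edist v b := by
          rw [SimpleGraph.edist_eq_one_iff_adj.mpr hab,
            SimpleGraph.edist_comm (u := b) (v := v), ← add_assoc]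
      _ ≤ setEDist G u (Apart i) + 1 + setEDist G v (B i) :=
          add_le_add (add_le_add hda le_rfl) hdb
  · rcases eq_or_ne (G.edist u v) ⊤ with h | h
    · rw [h]; exact le_top
    obtain ⟨p, hp⟩ := SimpleGraph.exists_walk_of_edist_ne_top h
    obtain ⟨a, b, ha, hb, hab, q, r, hlen⟩ := exists_cross p hu hv
    rw [← hcover] at ha
    obtain ⟨i, hi⟩ := Set.mem_iUnion.mp ha
    refine iInf_le_of_le i ?_
    have hbB : b ∈ B i := by rw [hB i]; exact ⟨hb, a, hi, hab⟩
    have h1 : setEDist G u (Apart i) ≤ (q.length : ℕ∞) :=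
      le_trans (setEDist_le G u hi) (SimpleGraph.edist_le q)
    have h2 : setEDist G v (B i) ≤ (r.length : ℕ∞) :=
      le_trans (setEDist_le G v hbB) (by rw [SimpleGraph.edist_comm]; exact SimpleGraph.edist_le r)
    calc setEDist G u (Apart i) + 1 + setEDist G v (B i)
        ≤ (q.length : ℕ∞) + 1 + (r.length : ℕ∞) := add_le_add (add_le_add h1 le_rfl) h2
      _ = (p.length : ℕ∞) := by rw [← hlen]; push_cast; ring
      _ = G.edist u v := hp
end

section
/- Let G be a graph, A ⊆ V(G), and suppose A_1,…,A_k is a partition of A such that each A_i is a module of G \ (A \ A_i), with B_i = N_G(A_i) \ A nonempty for each i. If u ∈ A and v ∉ A lie in the same connected component of G, then there exists a u–v path of length exactly d_G(u,A_i) + 1 + d_G(B_i,v) for every i with B_i ≠ ∅ such that these distances are finite; consequently d_G(u,v) ≤ d_G(u,A_i) + 1 + d_G(B_i,v). -/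
open scoped Classical

lemma setEDist_exists {V : Type*} [Fintype V] (G : SimpleGraph V) (u : V) (S : Set V)
    (h : setEDist G u S ≠ ⊤) : ∃ s ∈ S, G.edist u s = setEDist G u S := by
  have hS : S.Nonempty := by
    by_contra hS
    rw [Set.not_nonempty_iff_eq_empty] at hS
    simp [setEDist, hS] at h
  have h1 : setEDist G u S = sInf ((fun s => G.edist u s) '' S) := by
    rw [sInf_image]; rfl
  have h2 : sInf ((fun s => G.edist u s) '' S) ∈ (fun s => G.edist u s) '' S := by
    have := (hS.image (fun s => G.edist u s)).csInf_mem (S.toFinite.image _)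
    simpa using this
  rw [h1]
  obtain ⟨s, hs, hs'⟩ := h2
  exact ⟨s, hs, hs'⟩

/-- If `A_1, …, A_k` is a module partition of `A` (so there is a complete join between
`A_i` and `B_i = N_G(A_i) \ A`), all the `B_i` being nonempty, and `u ∈ A`, `v ∉ A` lie
in the same connected component, then for every `i` with `B_i ≠ ∅` whose distances are
finite there is a `u`–`v` walk of length exactly `d_G(u,A_i) + 1 + d_G(B_i,v)`;
consequently `d_G(u,v) ≤ d_G(u,A_i) + 1 + d_G(B_i,v)`. -/
theorem exists_path_through_join {V : Type*} [Fintype V] (G : SimpleGraph V)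
    (A : Set V) (k : ℕ) (Apart : Fin k → Set V)
    (hcover : (⋃ i, Apart i) = A)
    (hdisj : ∀ i j, i ≠ j → Disjoint (Apart i) (Apart j))
    (hmod : ∀ i, ∀ u ∈ Apart i, ∀ v ∈ Apart i, ∀ x ∉ A, (G.Adj u x ↔ G.Adj v x))
    (B : Fin k → Set V) (hB : ∀ i, B i = {x | x ∉ A ∧ ∃ a ∈ Apart i, G.Adj a x})
    (hBne : ∀ i, (B i).Nonempty)
    (u v : V) (hu : u ∈ A) (hv : v ∉ A) (hreach : G.Reachable u v) :
    ∀ i : Fin k, (B i).Nonempty →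
      setEDist G u (Apart i) ≠ ⊤ → setEDist G v (B i) ≠ ⊤ →
      (∃ p : G.Walk u v,
          (p.length : ℕ∞) = setEDist G u (Apart i) + 1 + setEDist G v (B i)) ∧
        G.edist u v ≤ setEDist G u (Apart i) + 1 + setEDist G v (B i) := by
  intro i _ hA hBv
  obtain ⟨a, ha, ha'⟩ := setEDist_exists G u (Apart i) hA
  obtain ⟨b, hb, hb'⟩ := setEDist_exists G v (B i) hBv
  have hbB : b ∉ A ∧ ∃ a' ∈ Apart i, G.Adj a' b := by rwa [hB i] at hb
  obtain ⟨hbA, a', ha'i, hadj⟩ := hbB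
  have hab : G.Adj a b := (hmod i a' ha'i a ha b hbA).mp hadj
  have hpa : G.edist u a ≠ ⊤ := by rw [ha']; exact hA
  have hqb : G.edist v b ≠ ⊤ := by rw [hb']; exact hBv
  obtain ⟨p, hp⟩ := SimpleGraph.exists_walk_of_edist_ne_top hpa
  obtain ⟨q, hq⟩ := SimpleGraph.exists_walk_of_edist_ne_top hqb
  set w : G.Walk u v := p.append (SimpleGraph.Walk.cons hab q.reverse) with hw
  have hwl : (w.length : ℕ∞) = setEDist G u (Apart i) + 1 + setEDist G v (B i) := by
    rw [← ha', ← hb', ← hp, ← hq]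
    simp [hw, SimpleGraph.Walk.length_append, SimpleGraph.Walk.length_reverse]
    push_cast
    ring
  exact ⟨⟨w, hwl⟩, hwl ▸ SimpleGraph.edist_le w⟩
end

section
/- Let (T,f) be a partition tree of a graph G = (V,E). Then for every node a of T, the set A = ⋃ f(a) is a |f(a)|-module of G, with a corresponding module partition being f(a) itself. -/
open scoped Classical

/-- A partition tree `(T, f)` of a graph `G` (Courcelle–Heggernes–et al.): a rooted tree
(given by a parent function `par` with root `root`) whose inner nodes have at least two
children, together with a map `f` assigning to each node a partition of a vertex-subset
of `G` (the node's *support* is `⋃₀ f a`), such that: every leaf carries a singleton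
`{{v}}` and every vertex occurs at some leaf; the supports of the children of an inner
node are pairwise disjoint and their union is the node's support; the union of the
children's partitions refines the node's partition; and the node's partition is
compatible with the edges between different children: adjacent vertices lying under
different children belong to distinct parts `X ≠ Y` of the node's partition, with a
complete join `X × Y ⊆ E`. -/
structure PartitionTree {V : Type*} (G : SimpleGraph V) where
  N : Type
  [instFin : Fintype N]
  root : N
  par : N → N
  par_root : par root = root
  reach_root : ∀ a : N, ∃ n : ℕ, par^[n] a = root
  f : N → Set (Set V)
  parts_nonempty : ∀ a : N, ∀ X ∈ f a, X.Nonempty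
  parts_disjoint : ∀ a : N, (f a).PairwiseDisjoint id
  leaf_singleton : ∀ a : N, (∀ b, par b = a → b = a) → ∃ v : V, f a = {{v}}
  vertex_leaf : ∀ v : V, ∃ a : N, f a = {{v}}
  inner_two_children : ∀ a : N, (∃ b, b ≠ a ∧ par b = a) →
    ∃ b c, b ≠ c ∧ b ≠ a ∧ c ≠ a ∧ par b = a ∧ par c = a
  children_disjoint : ∀ b c : N, b ≠ c → par b = par c → b ≠ par b → c ≠ par c →
    Disjoint (⋃₀ f b) (⋃₀ f c)
  support_eq : ∀ a : N, (∃ b, b ≠ a ∧ par b = a) →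
    ⋃₀ f a = ⋃ b ∈ {b : N | b ≠ a ∧ par b = a}, ⋃₀ f b
  refines : ∀ b : N, b ≠ par b → ∀ X ∈ f b, ∃ Y ∈ f (par b), X ⊆ Y
  compatible : ∀ b c : N, b ≠ c → b ≠ par b → c ≠ par c → par b = par c →
    ∀ u ∈ ⋃₀ f b, ∀ v ∈ ⋃₀ f c, G.Adj u v →
      ∀ X ∈ f (par b), ∀ Y ∈ f (par b), u ∈ X → v ∈ Y →
        X ≠ Y ∧ ∀ x ∈ X, ∀ y ∈ Y, G.Adj x y

section Aux

variable {V : Type*} (G : SimpleGraph V) (T : PartitionTree G)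

lemma pt_support_mono (b : T.N) : ⋃₀ T.f b ⊆ ⋃₀ T.f (T.par b) := by
  by_cases hb : b = T.par b
  · rw [← hb]
  · rintro x ⟨X, hX, hx⟩
    obtain ⟨Y, hY, hXY⟩ := T.refines b hb X hX
    exact ⟨Y, hY, hXY hx⟩

lemma pt_root_support (v : V) : v ∈ ⋃₀ T.f T.root := by
  obtain ⟨a, ha⟩ := T.vertex_leaf v
  obtain ⟨n, hn⟩ := T.reach_root a
  have hv : v ∈ ⋃₀ T.f a := by rw [ha]; simp
  have : ∀ k, v ∈ ⋃₀ T.f (T.par^[k] a) := by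
    intro k
    induction k with
    | zero => exact hv
    | succ k ih =>
      rw [Function.iterate_succ_apply']
      exact pt_support_mono G T _ ih
  rw [← hn]; exact this n

lemma pt_ne_par (a : T.N) (ha : a ≠ T.root) : a ≠ T.par a := by
  intro h
  obtain ⟨n, hn⟩ := T.reach_root a
  have : ∀ k, T.par^[k] a = a := by
    intro k
    induction k with
    | zero => rfl
    | succ k ih => rw [Function.iterate_succ_apply', ih, ← h]
  exact ha ((this n).symm.trans hn)

lemma pt_key : ∀ n : ℕ, ∀ a : T.N, T.par^[n] a = T.root →
    ∀ X ∈ T.f a, ∀ u ∈ X, ∀ v ∈ X, ∀ x ∉ ⋃₀ T.f a, G.Adj u x → G.Adj v x := by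
  intro n
  induction n with
  | zero =>
    intro a ha X hX u hu v hv x hx _
    simp only [Function.iterate_zero, id_eq] at ha
    exact absurd (ha ▸ pt_root_support G T x) hx
  | succ n ih =>
    intro a ha X hX u hu v hv x hx hadj
    by_cases har : a = T.root
    · exact absurd (har ▸ pt_root_support G T x) hx
    have hap : a ≠ T.par a := pt_ne_par G T a har
    obtain ⟨X', hX', hXX'⟩ := T.refines a hap X hX
    by_cases hxp : x ∈ ⋃₀ T.f (T.par a)
    · -- x is under some other child c of par a
      obtain ⟨Z, hZ, hxZ⟩ := hxp
      have hxp' : x ∈ ⋃₀ T.f (T.par a) := ⟨Z, hZ, hxZ⟩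
      have hsupp := T.support_eq (T.par a) ⟨a, hap, rfl⟩
      rw [hsupp] at hxp'
      simp only [Set.mem_iUnion, Set.mem_setOf_eq] at hxp'
      obtain ⟨c, ⟨hcp, hcpar⟩, hxc⟩ := hxp'
      have hca : a ≠ c := by
        rintro rfl; exact hx hxc
      have hcomp := T.compatible a c hca hap (by rw [hcpar]; exact hcp)
        hcpar.symm u ⟨X, hX, hu⟩ x hxc hadj X' hX' Z hZ (hXX' hu) hxZ
      exact hcomp.2 v (hXX' hv) x hxZ
    · exact ih (T.par a) (by rw [← Function.iterate_succ_apply]; exact ha)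
        X' hX' u (hXX' hu) v (hXX' hv) x hxp hadj

end Aux

/-- **Lemma 2.2 (1).** For every node `a` of a partition tree `(T, f)` of `G`, the set
`A = ⋃ f(a)` is an `|f(a)|`-module of `G`, a corresponding module partition being `f(a)`
itself: within each part `X ∈ f(a)`, all vertices have the same neighbours outside `A`. -/
theorem partitionTree_node_is_module {V : Type*} [Fintype V] (G : SimpleGraph V)
    (T : PartitionTree G) (a : T.N) :
    ∀ X ∈ T.f a, ∀ u ∈ X, ∀ v ∈ X, ∀ x ∉ ⋃₀ T.f a, (G.Adj u x ↔ G.Adj v x) := by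
  intro X hX u hu v hv x hx
  obtain ⟨n, hn⟩ := T.reach_root a
  exact ⟨fun h => pt_key G T n a hn X hX u hu v hv x hx h,
    fun h => pt_key G T n a hn X hX v hv u hu x hx h⟩
end

section
/- Let (T,f) be a partition tree of a graph G = (V,E), and let a_1,…,a_p be children of some node a' in T, with A_i = ⋃ f(a_i) and A = ⋃_{i=1}^p A_i. Then A is a |f(a')|-module of G, with corresponding module partition { X' ∩ A : X' ∈ f(a'), X' ∩ A ≠ ∅ }. -/
open scoped Classical

namespace PartitionTree

variable {V : Type*} {G : SimpleGraph V} (T : PartitionTree G)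

lemma support_mono (b : T.N) : ⋃₀ T.f b ⊆ ⋃₀ T.f (T.par b) := by
  by_cases h : b = T.par b
  · rw [← h]
  · rintro x ⟨X, hX, hx⟩
    obtain ⟨Y, hY, hXY⟩ := T.refines b h X hX
    exact ⟨Y, hY, hXY hx⟩

lemma support_mono_iter (b : T.N) (k : ℕ) : ⋃₀ T.f b ⊆ ⋃₀ T.f (T.par^[k] b) := by
  induction k with
  | zero => simp
  | succ n ih =>
    rw [Function.iterate_succ_apply']
    exact ih.trans (T.support_mono _)

lemma mem_root_support (v : V) : v ∈ ⋃₀ T.f T.root := by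
  obtain ⟨a, ha⟩ := T.vertex_leaf v
  obtain ⟨n, hn⟩ := T.reach_root a
  have hv : v ∈ ⋃₀ T.f a := ⟨{v}, by rw [ha]; rfl, rfl⟩
  have := T.support_mono_iter a n hv
  rwa [hn] at this

lemma common_part (a : T.N) (X : Set V) (hX : X ∈ T.f a) (u v : V) (hu : u ∈ X)
    (hv : v ∈ X) (k : ℕ) : ∃ Z ∈ T.f (T.par^[k] a), u ∈ Z ∧ v ∈ Z := by
  induction k with
  | zero => exact ⟨X, hX, hu, hv⟩
  | succ n ih =>
    obtain ⟨Z, hZ, huZ, hvZ⟩ := ih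
    rw [Function.iterate_succ_apply']
    by_cases h : T.par^[n] a = T.par (T.par^[n] a)
    · exact ⟨Z, h ▸ hZ, huZ, hvZ⟩
    · obtain ⟨W, hW, hZW⟩ := T.refines _ h Z hZ
      exact ⟨W, hW, hZW huZ, hZW hvZ⟩

lemma key (a' : T.N) (S : Set T.N) (hS : ∀ b ∈ S, b ≠ a' ∧ T.par b = a')
    (X' : Set V) (hX' : X' ∈ T.f a') (u : V) (hu : u ∈ X')
    (bu : T.N) (hbS : bu ∈ S) (hu2 : u ∈ ⋃₀ T.f bu)
    (v : V) (hv : v ∈ X')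
    (x : V) (hx : x ∉ ⋃ b ∈ S, ⋃₀ T.f b) (hadj : G.Adj u x) : G.Adj v x := by
  obtain ⟨hb1, hb2⟩ := hS bu hbS
  have hxA : ∀ b ∈ S, x ∉ ⋃₀ T.f b := fun b hb hxb => hx (Set.mem_biUnion hb hxb)
  by_cases hxa : x ∈ ⋃₀ T.f a'
  · -- x lies under another child of a'
    rw [T.support_eq a' ⟨bu, hb1, hb2⟩] at hxa
    simp only [Set.mem_iUnion, Set.mem_setOf_eq] at hxa
    obtain ⟨e, ⟨he1, he2⟩, hxe⟩ := hxa
    have hne : bu ≠ e := by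
      rintro rfl
      exact hxA bu hbS hxe
    obtain ⟨Yx, hYx, hxYx⟩ := hxe
    obtain ⟨Y', hY', hYY'⟩ := T.refines e (by rw [he2]; exact he1) Yx hYx
    rw [he2] at hY'
    have := T.compatible bu e hne (by rw [hb2]; exact hb1) (by rw [he2]; exact he1)
      (hb2.trans he2.symm) u hu2 x ⟨Yx, hYx, hxYx⟩ hadj
      X' (by rw [hb2]; exact hX') Y' (by rw [hb2]; exact hY') hu (hYY' hxYx)
    exact this.2 v hv x (hYY' hxYx)
  · -- climb to the least ancestor of a' whose support contains x
    have hex : ∃ k, x ∈ ⋃₀ T.f (T.par^[k] a') := by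
      obtain ⟨n, hn⟩ := T.reach_root a'
      exact ⟨n, hn ▸ T.mem_root_support x⟩
    classical
    have hkx : x ∈ ⋃₀ T.f (T.par^[Nat.find hex] a') := Nat.find_spec hex
    have hk0 : Nat.find hex ≠ 0 := by
      intro h
      rw [h] at hkx
      exact hxa (by simpa using hkx)
    obtain ⟨k', hkeq⟩ := Nat.exists_eq_succ_of_ne_zero hk0
    rw [hkeq] at hkx
    have hxc' : x ∉ ⋃₀ T.f (T.par^[k'] a') :=
      Nat.find_min hex (hkeq ▸ Nat.lt_succ_self k')
    set c' := T.par^[k'] a' with hc'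
    have hd : T.par^[k' + 1] a' = T.par c' := by
      rw [Function.iterate_succ_apply']
    rw [hd] at hkx
    have hc'd : c' ≠ T.par c' := by
      intro h
      rw [← h] at hkx
      exact hxc' hkx
    -- x lies under a child e of par c'
    rw [T.support_eq (T.par c') ⟨c', hc'd, rfl⟩] at hkx
    simp only [Set.mem_iUnion, Set.mem_setOf_eq] at hkx
    obtain ⟨e, ⟨he1, he2⟩, hxe⟩ := hkx
    have hne : c' ≠ e := by
      rintro rfl
      exact hxc' hxe
    obtain ⟨Yx, hYx, hxYx⟩ := hxe
    obtain ⟨Y', hY', hYY'⟩ := T.refines e (by rw [he2]; exact he1) Yx hYx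
    rw [he2] at hY'
    obtain ⟨Z, hZ, huZ, hvZ⟩ := T.common_part a' X' hX' u v hu hv (k' + 1)
    rw [hd] at hZ
    have huc' : u ∈ ⋃₀ T.f c' :=
      T.support_mono_iter a' k' ⟨X', hX', hu⟩
    have := T.compatible c' e hne hc'd (by rw [he2]; exact he1) he2.symm
      u huc' x ⟨Yx, hYx, hxYx⟩ hadj Z hZ Y' hY' huZ (hYY' hxYx)
    exact this.2 v hvZ x (hYY' hxYx)

end PartitionTree

/-- **Lemma 2.2 (2).** Let `a_1, …, a_p` be children of a node `a'` of a partition tree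
`(T, f)` of `G`, with `A_i = ⋃ f(a_i)` and `A = ⋃_{i=1}^p A_i`.  Then `A` is an
`|f(a')|`-module of `G`, a corresponding module partition being the family of nonempty
intersections `X' ∩ A` for `X' ∈ f(a')`: every vertex of `A` lies in some `X' ∈ f(a')`,
and within each `X' ∩ A` all vertices have the same neighbours outside `A`. -/
theorem partitionTree_children_union_is_module {V : Type*} [Fintype V] (G : SimpleGraph V)
    (T : PartitionTree G) (a' : T.N) (S : Set T.N)
    (hS : ∀ b ∈ S, b ≠ a' ∧ T.par b = a') :
    (∀ u ∈ ⋃ b ∈ S, ⋃₀ T.f b, ∃ X' ∈ T.f a', u ∈ X') ∧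
      ∀ X' ∈ T.f a',
        ∀ u ∈ X' ∩ ⋃ b ∈ S, ⋃₀ T.f b, ∀ v ∈ X' ∩ ⋃ b ∈ S, ⋃₀ T.f b,
          ∀ x ∉ ⋃ b ∈ S, ⋃₀ T.f b, (G.Adj u x ↔ G.Adj v x) := by
  constructor
  · intro u hu
    simp only [Set.mem_iUnion] at hu
    obtain ⟨b, hb, X, hX, huX⟩ := hu
    obtain ⟨hb1, hb2⟩ := hS b hb
    obtain ⟨Y, hY, hXY⟩ := T.refines b (by rw [hb2]; exact hb1) X hX
    rw [hb2] at hY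
    exact ⟨Y, hY, hXY huX⟩
  · rintro X' hX' u ⟨huX', hu⟩ v ⟨hvX', hv⟩ x hx
    simp only [Set.mem_iUnion] at hu hv
    obtain ⟨bu, hbu, hu2⟩ := hu
    obtain ⟨bv, hbv, hv2⟩ := hv
    exact ⟨fun h => T.key a' S hS X' hX' u huX' bu hbu hu2 v hvX' x hx h,
      fun h => T.key a' S hS X' hX' v hvX' bv hbv hv2 u huX' x hx h⟩
end

section
/- Let G = (V,E,w) be a connected edge-weighted graph and (A, V\A) an unweighted cut of neighbourhood diversity at most k, with minimal partition A_1,…,A_k of A and B_i = N_G(A_i)\A (all B_i nonempty, say). Let H_A be obtained from G[A] by adding fresh vertices b_{ij} (1 ≤ i,j ≤ k), joining each b_{ij} to all of A_i with unit-weight edges, and adding for i < j an edge b_{ij}b_{ji} of weight d_G(B_i,B_j). Then for all u,v ∈ A, d_G(u,v) = d_{H_A}(u,v). -/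
open scoped Classical

variable {V : Type*}

/-- The weight of a walk: the sum of the edge weights `w` along its darts. -/
def walkWeight (w : V → V → ℕ) {G : SimpleGraph V} {u v : V} (p : G.Walk u v) : ℕ :=
  (p.darts.map fun d => w d.toProd.1 d.toProd.2).sum

/-- Weighted shortest-path distance (`⊤` if there is no walk). -/
noncomputable def wdist (G : SimpleGraph V) (w : V → V → ℕ) (u v : V) : ℕ∞ :=
  ⨅ p : G.Walk u v, (walkWeight w p : ℕ∞)

/-- Weighted distance between two vertex sets: `min_{s∈S, t∈T} d(s,t)`. -/
noncomputable def wSetDist (G : SimpleGraph V) (w : V → V → ℕ) (S T : Set V) : ℕ∞ :=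
  ⨅ s ∈ S, ⨅ t ∈ T, wdist G w s t

/-- The underlying relation of the gadget graph `H_A` (Definition 4.2): on `G[A]`
(the other vertices of `V` are kept as isolated junk vertices) we add fresh vertices
`b_{ij} = inr (i,j)` for the parts `A_i` with `B_i ≠ ∅`; each `b_{ij}` is joined to all
of `A_i`, and `b_{ij}` is joined to `b_{ji}` for `i ≠ j`. -/
def gadgetRelA {k : ℕ} (G : SimpleGraph V) (A : Set V) (Apart B : Fin k → Set V) :
    (V ⊕ Fin k × Fin k) → (V ⊕ Fin k × Fin k) → Prop
  | Sum.inl u, Sum.inl v => u ∈ A ∧ v ∈ A ∧ G.Adj u v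
  | Sum.inl u, Sum.inr (i, _) => u ∈ Apart i ∧ (B i).Nonempty
  | Sum.inr (i, j), Sum.inr (i', j') =>
      i' = j ∧ j' = i ∧ i ≠ j ∧ (B i).Nonempty ∧ (B j).Nonempty
  | _, _ => False

/-- The gadget graph `H_A` of Definition 4.2. -/
def gadgetA {k : ℕ} (G : SimpleGraph V) (A : Set V) (Apart B : Fin k → Set V) :
    SimpleGraph (V ⊕ Fin k × Fin k) :=
  SimpleGraph.fromRel (gadgetRelA G A Apart B)

/-- The edge weights of `H_A`: weights of `G` inside `A`, unit weights between `A_i` and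
`b_{ij}`, and weight `d_G(B_i, B_j)` on the matching edge `b_{ij} b_{ji}`. -/
noncomputable def gadgetWeightA {k : ℕ} (G : SimpleGraph V) (w : V → V → ℕ)
    (B : Fin k → Set V) : (V ⊕ Fin k × Fin k) → (V ⊕ Fin k × Fin k) → ℕ
  | Sum.inl u, Sum.inl v => w u v
  | Sum.inr (i, _), Sum.inr (i', _) => (wSetDist G w (B i) (B i')).toNat
  | _, _ => 1


section Aux

lemma walkWeight_cons {w : V → V → ℕ} {G : SimpleGraph V} {u v x : V}
    (h : G.Adj u v) (p : G.Walk v x) :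
    walkWeight w (SimpleGraph.Walk.cons h p) = w u v + walkWeight w p := by
  simp [walkWeight]

lemma walkWeight_append {w : V → V → ℕ} {G : SimpleGraph V} {u v x : V}
    (p : G.Walk u v) (q : G.Walk v x) :
    walkWeight w (p.append q) = walkWeight w p + walkWeight w q := by
  simp [walkWeight, SimpleGraph.Walk.darts_append]

lemma wdist_le {G : SimpleGraph V} {w : V → V → ℕ} {u v : V} (p : G.Walk u v) :
    wdist G w u v ≤ (walkWeight w p : ℕ∞) := iInf_le _ p

lemma exists_eq_iInf_enat {ι : Sort*} [Nonempty ι] (f : ι → ℕ∞) : ∃ i, (⨅ j, f j) = f i := by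
  obtain ⟨a, ha, hmin⟩ := wellFounded_lt.has_min (Set.range f) (Set.range_nonempty f)
  obtain ⟨i, rfl⟩ := ha
  exact ⟨i, le_antisymm (iInf_le f i) (le_iInf fun j => not_lt.1 (hmin _ ⟨j, rfl⟩))⟩

lemma wdist_exists {G : SimpleGraph V} {w : V → V → ℕ} {u v : V} (h : Nonempty (G.Walk u v)) :
    ∃ p : G.Walk u v, wdist G w u v = (walkWeight w p : ℕ∞) :=
  exists_eq_iInf_enat _

lemma wdist_triangle {G : SimpleGraph V} {w : V → V → ℕ} (u x v : V) :
    wdist G w u v ≤ wdist G w u x + wdist G w x v := by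
  by_cases h1 : Nonempty (G.Walk u x)
  · by_cases h2 : Nonempty (G.Walk x v)
    · obtain ⟨p, hp⟩ := wdist_exists (w := w) h1
      obtain ⟨q, hq⟩ := wdist_exists (w := w) h2
      rw [hp, hq]
      calc wdist G w u v ≤ (walkWeight w (p.append q) : ℕ∞) := wdist_le _
        _ = _ := by rw [walkWeight_append]; push_cast; ring
    · rw [not_nonempty_iff] at h2
      have : wdist G w x v = ⊤ := by rw [wdist]; exact iInf_of_empty _
      simp [this]
  · rw [not_nonempty_iff] at h1
    have : wdist G w u x = ⊤ := by rw [wdist]; exact iInf_of_empty _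
    simp [this]

lemma wdist_ne_top {G : SimpleGraph V} (hG : G.Connected) (w : V → V → ℕ) (u v : V) :
    wdist G w u v ≠ ⊤ := by
  obtain ⟨p⟩ := hG.preconnected u v
  exact ne_top_of_le_ne_top (ENat.coe_ne_top _) (wdist_le p)

lemma wSetDist_le {G : SimpleGraph V} {w : V → V → ℕ} {S T : Set V} {s t : V}
    (hs : s ∈ S) (ht : t ∈ T) : wSetDist G w S T ≤ wdist G w s t :=
  iInf₂_le_of_le s hs (iInf₂_le t ht)

lemma wSetDist_exists {G : SimpleGraph V} {w : V → V → ℕ} {S T : Set V}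
    (hS : S.Nonempty) (hT : T.Nonempty) :
    ∃ s ∈ S, ∃ t ∈ T, wSetDist G w S T = wdist G w s t := by
  have : Nonempty (S × T) := ⟨⟨⟨hS.choose, hS.choose_spec⟩, ⟨hT.choose, hT.choose_spec⟩⟩⟩
  obtain ⟨⟨s, t⟩, hst⟩ := exists_eq_iInf_enat (fun p : S × T => wdist G w p.1 p.2)
  refine ⟨s, s.2, t, t.2, le_antisymm (wSetDist_le s.2 t.2) ?_⟩
  refine le_iInf₂ fun s' hs' => le_iInf₂ fun t' ht' => ?_
  calc wdist G w (↑s) (↑t) = ⨅ p : S × T, wdist G w (↑p.1) (↑p.2) := hst.symm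
    _ ≤ _ := iInf_le _ (⟨⟨s', hs'⟩, ⟨t', ht'⟩⟩ : S × T)

section GadgetAux
variable {k : ℕ} {G : SimpleGraph V} {A : Set V} {Apart B : Fin k → Set V}

lemma gadget_adj_ll {u v : V} :
    (gadgetA G A Apart B).Adj (Sum.inl u) (Sum.inl v) ↔ u ∈ A ∧ v ∈ A ∧ G.Adj u v := by
  constructor
  · rintro ⟨hne, h | h⟩
    · exact h
    · exact ⟨h.2.1, h.1, h.2.2.symm⟩
  · rintro ⟨h1, h2, h3⟩
    exact ⟨by simpa using h3.ne, Or.inl ⟨h1, h2, h3⟩⟩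

lemma gadget_adj_lr {u : V} {i j : Fin k} :
    (gadgetA G A Apart B).Adj (Sum.inl u) (Sum.inr (i, j)) ↔ u ∈ Apart i ∧ (B i).Nonempty := by
  constructor
  · rintro ⟨hne, h | h⟩
    · exact h
    · exact absurd h id
  · rintro h
    exact ⟨by simp, Or.inl h⟩

lemma gadget_adj_rl {u : V} {i j : Fin k} :
    (gadgetA G A Apart B).Adj (Sum.inr (i, j)) (Sum.inl u) ↔ u ∈ Apart i ∧ (B i).Nonempty := by
  rw [SimpleGraph.adj_comm]; exact gadget_adj_lr

lemma gadget_adj_rr {i j i' j' : Fin k} :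
    (gadgetA G A Apart B).Adj (Sum.inr (i, j)) (Sum.inr (i', j')) ↔
      i' = j ∧ j' = i ∧ i ≠ j ∧ (B i).Nonempty ∧ (B j).Nonempty := by
  constructor
  · rintro ⟨hne, h | h⟩
    · exact h
    · obtain ⟨h1, h2, h3, h4, h5⟩ := h
      subst h1; subst h2
      exact ⟨rfl, rfl, Ne.symm h3, h5, h4⟩
  · rintro ⟨h1, h2, h3, h4, h5⟩
    subst h1; subst h2
    refine ⟨?_, Or.inl ⟨rfl, rfl, h3, h4, h5⟩⟩
    simp only [ne_eq, Sum.inr.injEq, Prod.mk.injEq]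
    rintro ⟨rfl, -⟩; exact h3 rfl

end GadgetAux

section GadgetWeightAux
variable {k : ℕ} (G : SimpleGraph V) (w : V → V → ℕ) (B : Fin k → Set V)

lemma gadgetWeightA_ll (u v : V) : gadgetWeightA G w B (Sum.inl u) (Sum.inl v) = w u v := rfl

lemma gadgetWeightA_lr (u : V) (i j : Fin k) :
    gadgetWeightA G w B (Sum.inl u) (Sum.inr (i, j)) = 1 := rfl

lemma gadgetWeightA_rl (u : V) (i j : Fin k) :
    gadgetWeightA G w B (Sum.inr (i, j)) (Sum.inl u) = 1 := rfl

lemma gadgetWeightA_rr (i j i' j' : Fin k) :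
    gadgetWeightA G w B (Sum.inr (i, j)) (Sum.inr (i', j')) =
      (wSetDist G w (B i) (B i')).toNat := rfl

end GadgetWeightAux

end Aux

/-- **Lemma 4.4 for `H_A`.** Let `G` be connected with edge weights `w`, and
`(A, V \ A)` an unweighted cut whose minimal partition is `A_1, …, A_k`, with
`B_i = N_G(A_i) \ A` all nonempty.  Then the gadget graph `H_A` preserves the distances:
for all `u, v ∈ A`, `d_G(u,v) = d_{H_A}(u,v)`. -/
theorem gadgetA_preserves_distances [Fintype V] (G : SimpleGraph V) (w : V → V → ℕ)
    (hG : G.Connected) (hwsym : ∀ u v, w u v = w v u)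
    (A : Set V) (k : ℕ) (Apart : Fin k → Set V)
    (hcover : (⋃ i, Apart i) = A)
    (hne : ∀ i, (Apart i).Nonempty)
    (hdisj : ∀ i j, i ≠ j → Disjoint (Apart i) (Apart j))
    (hmod : ∀ i, ∀ u ∈ Apart i, ∀ v ∈ Apart i, ∀ x ∉ A, (G.Adj u x ↔ G.Adj v x))
    (hmin : ∀ i j, i ≠ j →
      ∃ u ∈ Apart i, ∃ v ∈ Apart j, ∃ x ∉ A, ¬ (G.Adj u x ↔ G.Adj v x))
    (B : Fin k → Set V) (hB : ∀ i, B i = {x | x ∉ A ∧ ∃ a ∈ Apart i, G.Adj a x})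
    (hBne : ∀ i, (B i).Nonempty)
    (hcut : ∀ a ∈ A, ∀ b, b ∉ A → G.Adj a b → w a b = 1) :
    ∀ u ∈ A, ∀ v ∈ A,
      wdist G w u v =
        wdist (gadgetA G A Apart B) (gadgetWeightA G w B) (Sum.inl u) (Sum.inl v) := by
  have hsub : ∀ i, Apart i ⊆ A := by
    intro i; rw [← hcover]; exact Set.subset_iUnion Apart i
  have hidx : ∀ u ∈ A, ∃ i, u ∈ Apart i := by
    intro u hu; rw [← hcover] at hu; exact Set.mem_iUnion.1 hu
  have hadjB : ∀ i, ∀ u ∈ Apart i, ∀ x ∈ B i, G.Adj u x := by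
    intro i u hu x hx
    rw [hB] at hx
    obtain ⟨hxA, a, ha, hax⟩ := hx
    exact (hmod i u hu a ha x hxA).2 hax
  have hwB : ∀ i, ∀ u ∈ Apart i, ∀ x ∈ B i, w u x = 1 := by
    intro i u hu x hx
    have hxA : x ∉ A := by rw [hB] at hx; exact hx.1
    exact hcut u (hsub i hu) x hxA (hadjB i u hu x hx)
  have hmemB : ∀ i, ∀ a ∈ Apart i, ∀ x, x ∉ A → G.Adj a x → x ∈ B i := by
    intro i a ha x hxA hax; rw [hB]; exact ⟨hxA, a, ha, hax⟩
  have hdne : ∀ i j, wSetDist G w (B i) (B j) ≠ ⊤ := by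
    intro i j
    obtain ⟨s, hs⟩ := hBne i
    obtain ⟨t, ht⟩ := hBne j
    exact ne_top_of_le_ne_top (wdist_ne_top hG w s t) (wSetDist_le hs ht)
  have hcoe : ∀ i j, ((wSetDist G w (B i) (B j)).toNat : ℕ∞) = wSetDist G w (B i) (B j) :=
    fun i j => ENat.coe_toNat (hdne i j)
  have hedgeG : ∀ {a b : V}, G.Adj a b → wdist G w a b ≤ (w a b : ℕ∞) := by
    intro a b hab
    have h := wdist_le (w := w) (SimpleGraph.Walk.cons hab SimpleGraph.Walk.nil)
    simpa [walkWeight_cons, walkWeight] using h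
  -- distance bounds in G between parts
  have b1 : ∀ i, ∀ u ∈ Apart i, ∀ u' ∈ Apart i, wdist G w u u' ≤ 2 := by
    intro i u hu u' hu'
    obtain ⟨x, hx⟩ := hBne i
    calc wdist G w u u' ≤ wdist G w u x + wdist G w x u' := wdist_triangle _ _ _
      _ ≤ (w u x : ℕ∞) + (w x u' : ℕ∞) :=
          add_le_add (hedgeG (hadjB i u hu x hx)) (hedgeG (hadjB i u' hu' x hx).symm)
      _ = 2 := by rw [hwB i u hu x hx, hwsym x u', hwB i u' hu' x hx]; norm_num
  have b2 : ∀ i j, ∀ u ∈ Apart i, ∀ u' ∈ Apart j,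
      wdist G w u u' ≤ 1 + wSetDist G w (B i) (B j) + 1 := by
    intro i j u hu u' hu'
    obtain ⟨s, hs, t, ht, hst⟩ := wSetDist_exists (G := G) (w := w) (hBne i) (hBne j)
    calc wdist G w u u' ≤ wdist G w u s + wdist G w s u' := wdist_triangle _ _ _
      _ ≤ wdist G w u s + (wdist G w s t + wdist G w t u') :=
          add_le_add_right (wdist_triangle _ _ _) _
      _ ≤ (1 : ℕ∞) + (wSetDist G w (B i) (B j) + 1) := by
          refine add_le_add ?_ (add_le_add ?_ ?_)
          · calc wdist G w u s ≤ (w u s : ℕ∞) := hedgeG (hadjB i u hu s hs)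
              _ = 1 := by rw [hwB i u hu s hs]; norm_num
          · exact hst.ge
          · calc wdist G w t u' ≤ (w t u' : ℕ∞) := hedgeG (hadjB j u' hu' t ht).symm
              _ = 1 := by rw [hwsym t u', hwB j u' hu' t ht]; norm_num
      _ = 1 + wSetDist G w (B i) (B j) + 1 := by rw [add_assoc]
  -- adjacencies in the gadget graph
  have hAdj_lr : ∀ (i j : Fin k) (u : V), u ∈ Apart i →
      (gadgetA G A Apart B).Adj (Sum.inl u) (Sum.inr (i, j)) :=
    fun i _ u hu => gadget_adj_lr.2 ⟨hu, hBne i⟩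
  have hAdj_rl : ∀ (i j : Fin k) (u : V), u ∈ Apart i →
      (gadgetA G A Apart B).Adj (Sum.inr (i, j)) (Sum.inl u) :=
    fun i _ u hu => gadget_adj_rl.2 ⟨hu, hBne i⟩
  have hAdj_rr : ∀ (i j : Fin k), i ≠ j →
      (gadgetA G A Apart B).Adj (Sum.inr (i, j)) (Sum.inr (j, i)) :=
    fun i j hij => gadget_adj_rr.2 ⟨rfl, rfl, hij, hBne i, hBne j⟩
  -- route bounds in the gadget graph
  have hb1 : ∀ i, ∀ u ∈ Apart i, ∀ y ∈ Apart i,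
      wdist (gadgetA G A Apart B) (gadgetWeightA G w B) (Sum.inl u) (Sum.inl y) ≤ 2 := by
    intro i u hu y hy
    have h := wdist_le (w := gadgetWeightA G w B)
      (SimpleGraph.Walk.cons (hAdj_lr i i u hu)
        (SimpleGraph.Walk.cons (hAdj_rl i i y hy) SimpleGraph.Walk.nil))
    simpa [walkWeight_cons, walkWeight, gadgetWeightA_lr, gadgetWeightA_rl] using h
  have hb2 : ∀ i j, i ≠ j → ∀ u ∈ Apart i, ∀ y ∈ Apart j,
      wdist (gadgetA G A Apart B) (gadgetWeightA G w B) (Sum.inl u) (Sum.inl y)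
        ≤ 1 + wSetDist G w (B i) (B j) + 1 := by
    intro i j hij u hu y hy
    have h := wdist_le (w := gadgetWeightA G w B)
      (SimpleGraph.Walk.cons (hAdj_lr i j u hu)
        (SimpleGraph.Walk.cons (hAdj_rr i j hij)
          (SimpleGraph.Walk.cons (hAdj_rl j i y hy) SimpleGraph.Walk.nil)))
    refine h.trans ?_
    rw [walkWeight_cons, walkWeight_cons, walkWeight_cons,
      gadgetWeightA_lr, gadgetWeightA_rr, gadgetWeightA_rl]
    push_cast
    rw [hcoe i j]
    simp [walkWeight, add_assoc]
  have hbe : ∀ u ∈ A, ∀ x ∈ A, G.Adj u x →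
      wdist (gadgetA G A Apart B) (gadgetWeightA G w B) (Sum.inl u) (Sum.inl x)
        ≤ (w u x : ℕ∞) := by
    intro u hu x hx hadj
    have h := wdist_le (w := gadgetWeightA G w B)
      (SimpleGraph.Walk.cons ((gadget_adj_ll (G := G) (A := A) (Apart := Apart) (B := B)).2 ⟨hu, hx, hadj⟩) SimpleGraph.Walk.nil)
    simpa [walkWeight_cons, walkWeight, gadgetWeightA_ll] using h
  -- Direction 1: every gadget walk dominates the G-distance
  have C1 : ∀ n (u v : V) (p : (gadgetA G A Apart B).Walk (Sum.inl u) (Sum.inl v)),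
      p.length = n → wdist G w u v ≤ (walkWeight (gadgetWeightA G w B) p : ℕ∞) := by
    intro n
    induction n using Nat.strong_induction_on with
    | _ n IH =>
    intro u v p hlen
    cases p with
    | nil =>
      have h := wdist_le (w := w) (SimpleGraph.Walk.nil : G.Walk u u)
      simpa [walkWeight] using h
    | cons h q =>
      rename_i x
      cases x with
      | inl u' =>
        obtain ⟨huA, hu'A, hadj⟩ := gadget_adj_ll.1 h
        have hlq : q.length < n := by
          simp only [SimpleGraph.Walk.length_cons] at hlen; omega
        calc wdist G w u v ≤ wdist G w u u' + wdist G w u' v := wdist_triangle _ _ _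
          _ ≤ (w u u' : ℕ∞) + (walkWeight (gadgetWeightA G w B) q : ℕ∞) :=
              add_le_add (hedgeG hadj) (IH _ hlq u' v q rfl)
          _ = _ := by rw [walkWeight_cons, gadgetWeightA_ll]; push_cast; ring
      | inr ij =>
        obtain ⟨i, j⟩ := ij
        have h' := (gadget_adj_lr.1 h).1
        cases q with
        | cons h2 r =>
          rename_i y
          cases y with
          | inl u' =>
            have h2' := (gadget_adj_rl.1 h2).1
            have hlr : r.length < n := by
              simp only [SimpleGraph.Walk.length_cons] at hlen; omega
            calc wdist G w u v ≤ wdist G w u u' + wdist G w u' v := wdist_triangle _ _ _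
              _ ≤ 2 + (walkWeight (gadgetWeightA G w B) r : ℕ∞) :=
                  add_le_add (b1 i u h' u' h2') (IH _ hlr u' v r rfl)
              _ = _ := by
                  rw [walkWeight_cons, walkWeight_cons, gadgetWeightA_lr, gadgetWeightA_rl]
                  push_cast; ring
          | inr ij' =>
            obtain ⟨i', j'⟩ := ij'
            obtain ⟨h1e, h2e, hij, -, -⟩ := gadget_adj_rr.1 h2
            subst i'
            subst j'
            cases r with
            | cons h3 s =>
              rename_i z
              cases z with
              | inl u'' =>
                have h3' := (gadget_adj_rl.1 h3).1
                have hls : s.length < n := by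
                  simp only [SimpleGraph.Walk.length_cons] at hlen; omega
                calc wdist G w u v ≤ wdist G w u u'' + wdist G w u'' v := wdist_triangle _ _ _
                  _ ≤ (1 + wSetDist G w (B i) (B j) + 1) +
                      (walkWeight (gadgetWeightA G w B) s : ℕ∞) :=
                      add_le_add (b2 i j u h' u'' h3') (IH _ hls u'' v s rfl)
                  _ = _ := by
                      rw [walkWeight_cons, walkWeight_cons, walkWeight_cons,
                        gadgetWeightA_lr, gadgetWeightA_rr, gadgetWeightA_rl]
                      push_cast
                      rw [hcoe i j]
                      ring
              | inr ij2 =>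
                obtain ⟨i2, j2⟩ := ij2
                obtain ⟨h3e, h4e, -, -, -⟩ := gadget_adj_rr.1 h3
                subst i2
                subst j2
                have hls : s.length + 1 < n := by
                  simp only [SimpleGraph.Walk.length_cons] at hlen; omega
                have hmain := IH _ hls u v (SimpleGraph.Walk.cons h s) rfl
                refine hmain.trans ?_
                rw [walkWeight_cons, walkWeight_cons, walkWeight_cons, walkWeight_cons]
                exact Nat.cast_le.mpr (by omega)
  -- Direction 2: every G-walk dominates the gadget distance
  have C23 : ∀ n,
      (∀ (u v : V) (p : G.Walk u v), p.length = n → u ∈ A → v ∈ A →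
        wdist (gadgetA G A Apart B) (gadgetWeightA G w B) (Sum.inl u) (Sum.inl v)
          ≤ (walkWeight w p : ℕ∞)) ∧
      (∀ (x v : V) (q : G.Walk x v), q.length = n → x ∉ A → v ∈ A →
        ∀ (i : Fin k) (u : V), u ∈ Apart i →
        wdist (gadgetA G A Apart B) (gadgetWeightA G w B) (Sum.inl u) (Sum.inl v)
          ≤ 1 + wSetDist G w (B i) {x} + (walkWeight w q : ℕ∞)) := by
    intro n
    induction n using Nat.strong_induction_on with
    | _ n IH =>
    constructor
    · intro u v p hlen hu hv
      cases p with
      | nil =>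
        have h := wdist_le (w := gadgetWeightA G w B)
          (SimpleGraph.Walk.nil : (gadgetA G A Apart B).Walk (Sum.inl u) (Sum.inl u))
        simpa [walkWeight] using h
      | cons h q =>
        rename_i x
        have hlq : q.length < n := by
          simp only [SimpleGraph.Walk.length_cons] at hlen; omega
        by_cases hx : x ∈ A
        · calc wdist (gadgetA G A Apart B) (gadgetWeightA G w B) (Sum.inl u) (Sum.inl v)
              ≤ wdist (gadgetA G A Apart B) (gadgetWeightA G w B) (Sum.inl u) (Sum.inl x) +
                wdist (gadgetA G A Apart B) (gadgetWeightA G w B) (Sum.inl x) (Sum.inl v) :=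
              wdist_triangle _ _ _
            _ ≤ (w u x : ℕ∞) + (walkWeight w q : ℕ∞) :=
              add_le_add (hbe u hu x hx h) ((IH _ hlq).1 x v q rfl hx hv)
            _ = _ := by rw [walkWeight_cons]; push_cast; ring
        · obtain ⟨i, hui⟩ := hidx u hu
          have hD : wSetDist G w (B i) {x} = 0 := by
            refine le_antisymm ?_ zero_le
            refine le_trans (wSetDist_le (hmemB i u hui x hx h) rfl) ?_
            have h0 := wdist_le (w := w) (SimpleGraph.Walk.nil : G.Walk x x)
            simpa [walkWeight] using h0
          have hgo := (IH _ hlq).2 x v q rfl hx hv i u hui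
          rw [hD] at hgo
          refine hgo.trans ?_
          rw [walkWeight_cons, hcut u hu x hx h]
          push_cast
          ring_nf
          rfl
    · intro x v q hlen hx hv i u hui
      cases q with
      | nil => exact absurd hv hx
      | cons h r =>
        rename_i y
        have hlr : r.length < n := by
          simp only [SimpleGraph.Walk.length_cons] at hlen; omega
        by_cases hy : y ∈ A
        · obtain ⟨j, hyj⟩ := hidx y hy
          have hxBj : x ∈ B j := hmemB j y hyj x hx h.symm
          have hwxy : w x y = 1 := by rw [hwsym]; exact hcut y hy x hx h.symm
          have hr := (IH _ hlr).1 y v r rfl hy hv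
          have hDge : wSetDist G w (B i) (B j) ≤ wSetDist G w (B i) {x} := by
            obtain ⟨s, hs, t, ht, hst⟩ :=
              wSetDist_exists (G := G) (w := w) (hBne i) (Set.singleton_nonempty x)
            rw [Set.mem_singleton_iff] at ht
            rw [ht] at hst
            rw [hst]
            exact wSetDist_le hs hxBj
          by_cases hij : i = j
          · subst hij
            calc wdist (gadgetA G A Apart B) (gadgetWeightA G w B) (Sum.inl u) (Sum.inl v)
                ≤ wdist (gadgetA G A Apart B) (gadgetWeightA G w B) (Sum.inl u) (Sum.inl y) +
                  wdist (gadgetA G A Apart B) (gadgetWeightA G w B) (Sum.inl y) (Sum.inl v) :=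
                wdist_triangle _ _ _
              _ ≤ 2 + (walkWeight w r : ℕ∞) := add_le_add (hb1 i u hui y hyj) hr
              _ ≤ 1 + wSetDist G w (B i) {x} + ((walkWeight w (SimpleGraph.Walk.cons h r) : ℕ) : ℕ∞) := by
                  rw [walkWeight_cons, hwxy]
                  push_cast
                  calc (2 : ℕ∞) + (walkWeight w r : ℕ∞)
                      = 1 + 0 + (1 + (walkWeight w r : ℕ∞)) := by ring
                    _ ≤ 1 + wSetDist G w (B i) {x} + (1 + (walkWeight w r : ℕ∞)) := by
                        gcongr
                        exact zero_le
          · calc wdist (gadgetA G A Apart B) (gadgetWeightA G w B) (Sum.inl u) (Sum.inl v)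
                ≤ wdist (gadgetA G A Apart B) (gadgetWeightA G w B) (Sum.inl u) (Sum.inl y) +
                  wdist (gadgetA G A Apart B) (gadgetWeightA G w B) (Sum.inl y) (Sum.inl v) :=
                wdist_triangle _ _ _
              _ ≤ (1 + wSetDist G w (B i) (B j) + 1) + (walkWeight w r : ℕ∞) :=
                add_le_add (hb2 i j hij u hui y hyj) hr
              _ ≤ (1 + wSetDist G w (B i) {x} + 1) + (walkWeight w r : ℕ∞) := by gcongr
              _ = _ := by rw [walkWeight_cons, hwxy]; push_cast; ring
        · have hDtri : wSetDist G w (B i) {y} ≤ wSetDist G w (B i) {x} + (w x y : ℕ∞) := by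
            obtain ⟨s, hs, t, ht, hst⟩ :=
              wSetDist_exists (G := G) (w := w) (hBne i) (Set.singleton_nonempty x)
            rw [Set.mem_singleton_iff] at ht
            rw [ht] at hst
            calc wSetDist G w (B i) {y} ≤ wdist G w s y := wSetDist_le hs rfl
              _ ≤ wdist G w s x + wdist G w x y := wdist_triangle _ _ _
              _ ≤ wSetDist G w (B i) {x} + (w x y : ℕ∞) := by
                  rw [hst]; exact add_le_add_right (hedgeG h) _
          have hgo := (IH _ hlr).2 y v r rfl hy hv i u hui
          calc wdist (gadgetA G A Apart B) (gadgetWeightA G w B) (Sum.inl u) (Sum.inl v)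
              ≤ 1 + wSetDist G w (B i) {y} + (walkWeight w r : ℕ∞) := hgo
            _ ≤ 1 + (wSetDist G w (B i) {x} + (w x y : ℕ∞)) + (walkWeight w r : ℕ∞) := by
                gcongr
            _ = _ := by rw [walkWeight_cons]; push_cast; ring
  intro u hu v hv
  refine le_antisymm ?_ ?_
  · exact le_iInf fun p => C1 p.length u v p rfl
  · exact le_iInf fun p => (C23 p.length).1 u v p rfl hu hv
end

section
/- Let G be a connected weighted graph, (A, V\A) an unweighted cut of neighbourhood diversity at most k, and H_A the gadget graph built from G[A] by adding vertices b_{ij} as in the distance-preserver construction. Then for every A' ⊆ A, if A' is a k-module of G then A' is a k-module of H_A. -/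
open scoped Classical

variable {V : Type*}

/-- `M` is a `k`-module of the graph `H`: it can be partitioned into (at most) `k` parts
such that within each part all vertices have identical neighbourhoods outside `M`. -/
def IsKModule {α : Type*} (H : SimpleGraph α) (k : ℕ) (M : Set α) : Prop :=
  ∃ P : Fin k → Set α, (⋃ i, P i) = M ∧
    (∀ i j, i ≠ j → Disjoint (P i) (P j)) ∧
    ∀ i, ∀ u ∈ P i, ∀ v ∈ P i, ∀ x ∉ M, (H.Adj u x ↔ H.Adj v x)

/-- **Lemma 4.5 (1).** Let `(A, V \ A)` be an unweighted cut of neighbourhood diversity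
at most `k` of a connected graph `G`, with minimal partition `A_1, …, A_k` of `A`, and
let `H_A` be the gadget graph of Definition 4.2.  Then for every `A' ⊆ A`, if `A'` is a
`k`-module of `G` then (its copy) is a `k`-module of `H_A`. -/
theorem gadgetA_preserves_kmodules [Fintype V] (G : SimpleGraph V) (hG : G.Connected)
    (A : Set V) (k : ℕ) (Apart : Fin k → Set V)
    (hcover : (⋃ i, Apart i) = A)
    (hne : ∀ i, (Apart i).Nonempty)
    (hdisj : ∀ i j, i ≠ j → Disjoint (Apart i) (Apart j))
    (hmod : ∀ i, ∀ u ∈ Apart i, ∀ v ∈ Apart i, ∀ x ∉ A, (G.Adj u x ↔ G.Adj v x))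
    (hmin : ∀ i j, i ≠ j →
      ∃ u ∈ Apart i, ∃ v ∈ Apart j, ∃ x ∉ A, ¬ (G.Adj u x ↔ G.Adj v x))
    (B : Fin k → Set V) (hB : ∀ i, B i = {x | x ∉ A ∧ ∃ a ∈ Apart i, G.Adj a x})
    (A' : Set V) (hA' : A' ⊆ A) (hmodA' : IsKModule G k A') :
    IsKModule (gadgetA G A Apart B) k (Sum.inl '' A') := by

  obtain ⟨P, hPc, hPd, hPm⟩ := hmodA'
  refine ⟨fun i => Sum.inl '' P i, ?_, ?_, ?_⟩
  · rw [← Set.image_iUnion, hPc]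
  · intro i j hij
    exact Set.disjoint_image_of_injective Sum.inl_injective (hPd i j hij)
  · rintro i u ⟨u₀, hu₀, rfl⟩ v ⟨v₀, hv₀, rfl⟩ x hx
    have hu₀A' : u₀ ∈ A' := hPc ▸ Set.mem_iUnion.mpr ⟨i, hu₀⟩
    have hv₀A' : v₀ ∈ A' := hPc ▸ Set.mem_iUnion.mpr ⟨i, hv₀⟩
    have hu₀A : u₀ ∈ A := hA' hu₀A'
    have hv₀A : v₀ ∈ A := hA' hv₀A'
    -- key: u₀ and v₀ lie in the same parts Apart j
    have key : ∀ j, u₀ ∈ Apart j ↔ v₀ ∈ Apart j := by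
      have main : ∀ a b : V, a ∈ P i → b ∈ P i → ∀ j, a ∈ Apart j → b ∈ Apart j := by
        intro a b ha hb j haj
        have hbA : b ∈ A := hA' (hPc ▸ Set.mem_iUnion.mpr ⟨i, hb⟩)
        obtain ⟨j', hbj'⟩ := Set.mem_iUnion.mp (hcover ▸ hbA)
        by_cases hjj : j' = j
        · exact hjj ▸ hbj'
        · exfalso
          obtain ⟨u', hu', v', hv', x', hx'A, hx'⟩ := hmin j j' (Ne.symm hjj)
          have h1 : G.Adj a x' ↔ G.Adj u' x' := hmod j a haj u' hu' x' hx'A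
          have h2 : G.Adj b x' ↔ G.Adj v' x' := hmod j' b hbj' v' hv' x' hx'A
          have h3 : G.Adj a x' ↔ G.Adj b x' :=
            hPm i a ha b hb x' (fun h => hx'A (hA' h))
          exact hx' (h1.symm.trans (h3.trans h2))
      exact fun j => ⟨main u₀ v₀ hu₀ hv₀ j, main v₀ u₀ hv₀ hu₀ j⟩
    obtain (w | ⟨p, q⟩) := x
    · have hwA' : w ∉ A' := fun h => hx ⟨w, h, rfl⟩
      have hiff : G.Adj u₀ w ↔ G.Adj v₀ w := hPm i u₀ hu₀ v₀ hv₀ w hwA'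
      simp only [gadgetA, SimpleGraph.fromRel_adj, gadgetRelA]
      constructor
      · rintro ⟨-, (⟨-, hwA, hadj⟩ | ⟨hwA, -, hadj⟩)⟩
        · exact ⟨fun h => G.loopless.irrefl w (Sum.inl_injective h ▸ hiff.mp hadj),
            Or.inl ⟨hv₀A, hwA, hiff.mp hadj⟩⟩
        · exact ⟨fun h => G.loopless.irrefl w (Sum.inl_injective h ▸ hiff.mp hadj.symm),
            Or.inl ⟨hv₀A, hwA, hiff.mp hadj.symm⟩⟩
      · rintro ⟨-, (⟨-, hwA, hadj⟩ | ⟨hwA, -, hadj⟩)⟩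
        · exact ⟨fun h => G.loopless.irrefl w (Sum.inl_injective h ▸ hiff.mpr hadj),
            Or.inl ⟨hu₀A, hwA, hiff.mpr hadj⟩⟩
        · exact ⟨fun h => G.loopless.irrefl w (Sum.inl_injective h ▸ hiff.mpr hadj.symm),
            Or.inl ⟨hu₀A, hwA, hiff.mpr hadj.symm⟩⟩
    · simp only [gadgetA, SimpleGraph.fromRel_adj, gadgetRelA]
      constructor
      · rintro ⟨-, (⟨hup, hBp⟩ | h)⟩
        · exact ⟨Sum.inl_ne_inr (a := v₀), Or.inl ⟨(key p).mp hup, hBp⟩⟩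
        · exact absurd h not_false
      · rintro ⟨-, (⟨hvp, hBp⟩ | h)⟩
        · exact ⟨Sum.inl_ne_inr (a := u₀), Or.inl ⟨(key p).mpr hvp, hBp⟩⟩
        · exact absurd h not_false
end
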